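/- For any integers c_1, …, c_l with l ≥ 1, one has E^♭_l(c_1,…,c_{l−1}, c_l − 1)_q = E^♯_l(c_1,…,c_l)_q − q^{c_l − 2}·E^♯_{l−1}(c_1,…,c_{l−1})_q. -/

import Mathlib

noncomputable section

/-- The field ℚ(q) of rational functions over ℚ. -/
abbrev K : Type := RatFunc ℚ

/-- The variable q. -/
def q : K := RatFunc.X

/-- Right q-integer `[n]^♯` with deformation parameter `x`. -/
def qsX (x : K) (n : ℤ) : K := (1 - x ^ n) / (1 - x)

/-- Left q-integer `[n]^♭` with deformation parameter `x`. -/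
def qfX (x : K) (n : ℤ) : K := (1 - x ^ (n - 1) + x ^ n - x ^ (n + 1)) / (1 - x)

/-- Right q-integer `[n]^♯_q`. -/
def qs (n : ℤ) : K := qsX q n

/-- Left q-integer `[n]^♭_q`. -/
def qf (n : ℤ) : K := qfX q n

/-- Right q-deformed Euler continuant `E^♯` (first-row expansion of the
tridiagonal determinant), with parameter `x`. -/
def EsharpX (x : K) : List ℤ → K
  | [] => 1
  | [c] => qsX x c
  | c :: d :: rest => qsX x c * EsharpX x (d :: rest) - x ^ (c - 1) * EsharpX x rest

/-- Left q-deformed Euler continuant `E^♭` (first-row expansion of the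
tridiagonal determinant whose (k,k) entry is the left q-integer), with parameter `x`. -/
def EflatX (x : K) : List ℤ → K
  | [] => 1
  | [c] => qfX x c
  | c :: d :: rest => qsX x c * EflatX x (d :: rest) - x ^ (c - 1) * EflatX x rest

def Esharp (L : List ℤ) : K := EsharpX q L

def Eflat (L : List ℤ) : K := EflatX q L

/-- `E^♯_{j-1}(d_2,…,d_j)` for the input list `(d_1,…,d_j)`, with the
convention `E^♯_{-1}() = 0` when the list is empty. -/
def EsharpD : List ℤ → K
  | [] => 0
  | _ :: rest => Esharp rest

/-- `E^♭_{j-1}(d_2,…,d_j)` for the input list `(d_1,…,d_j)`, with the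
convention `E^♭_{-1}() = 1 - q` when the list is empty. -/
def EflatD : List ℤ → K
  | [] => 1 - q
  | _ :: rest => Eflat rest

/-- Left q-deformed negative continued fraction `[[c_1,…,c_k]]^♭_q`. -/
def nflat : List ℤ → K
  | [] => 0
  | [c] => qf c
  | c :: d :: rest => qs c - q ^ (c - 1) / nflat (d :: rest)

/-- Right q-deformed negative continued fraction `[[c_1,…,c_k]]^♯_q`. -/
def nsharp : List ℤ → K
  | [] => 0
  | [c] => qs c
  | c :: d :: rest => qs c - q ^ (c - 1) / nsharp (d :: rest)

/-- Left q-deformed regular continued fraction, with alternating parameter `x`, `x⁻¹`. -/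
def regFlatX : K → List ℤ → K
  | _, [] => 0
  | x, [a] => qfX x a
  | x, a :: d :: rest => qsX x a + x ^ a / regFlatX x⁻¹ (d :: rest)

/-- Left q-deformed regular continued fraction `[a_1,…,a_{2m}]^♭_q`. -/
def regFlat (L : List ℤ) : K := regFlatX q L

/-- Classical negative continued fraction `[[c_1,…,c_k]] ∈ ℚ`. -/
def negCF : List ℤ → ℚ
  | [] => 0
  | [c] => c
  | c :: d :: rest => c - 1 / negCF (d :: rest)

/-- Classical regular continued fraction `[a_1,…,a_{2m}] ∈ ℚ`. -/
def regCF : List ℤ → ℚ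
  | [] => 0
  | [a] => a
  | a :: d :: rest => a + 1 / regCF (d :: rest)

/-- The matrix σ_{1,q} as an invertible 2×2 matrix over ℚ(q). -/
def σ1 : (Matrix (Fin 2) (Fin 2) K)ˣ where
  val := !![q⁻¹, -q⁻¹; 0, 1]
  inv := !![q, 1; 0, 1]
  val_inv := by
    have hq : (q : K) ≠ 0 := RatFunc.X_ne_zero
    ext i j
    fin_cases i <;> fin_cases j <;>
      simp [Matrix.mul_apply, Fin.sum_univ_two, inv_mul_cancel₀ hq]
  inv_val := by
    have hq : (q : K) ≠ 0 := RatFunc.X_ne_zero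
    ext i j
    fin_cases i <;> fin_cases j <;>
      simp [Matrix.mul_apply, Fin.sum_univ_two, mul_inv_cancel₀ hq]

/-- The matrix σ_{2,q} as an invertible 2×2 matrix over ℚ(q). -/
def σ2 : (Matrix (Fin 2) (Fin 2) K)ˣ where
  val := !![1, 0; 1, q⁻¹]
  inv := !![1, 0; -q, q]
  val_inv := by
    have hq : (q : K) ≠ 0 := RatFunc.X_ne_zero
    ext i j
    fin_cases i <;> fin_cases j <;>
      simp [Matrix.mul_apply, Fin.sum_univ_two, inv_mul_cancel₀ hq]
  inv_val := by
    have hq : (q : K) ≠ 0 := RatFunc.X_ne_zero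
    ext i j
    fin_cases i <;> fin_cases j <;>
      simp [Matrix.mul_apply, Fin.sum_univ_two, mul_inv_cancel₀ hq]

/-- The matrix S_q as an invertible 2×2 matrix over ℚ(q). -/
def Sq : (Matrix (Fin 2) (Fin 2) K)ˣ where
  val := !![0, -q⁻¹; 1, 0]
  inv := !![0, 1; -q, 0]
  val_inv := by
    have hq : (q : K) ≠ 0 := RatFunc.X_ne_zero
    ext i j
    fin_cases i <;> fin_cases j <;>
      simp [Matrix.mul_apply, Fin.sum_univ_two, inv_mul_cancel₀ hq]
  inv_val := by
    have hq : (q : K) ≠ 0 := RatFunc.X_ne_zero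
    ext i j
    fin_cases i <;> fin_cases j <;>
      simp [Matrix.mul_apply, Fin.sum_univ_two, mul_inv_cancel₀ hq]

/-- The product σ_{1,q}^{-c_1}·S_q·σ_{1,q}^{-c_2}·S_q⋯σ_{1,q}^{-c_k}·S_q. -/
def prodCS : List ℤ → (Matrix (Fin 2) (Fin 2) K)ˣ
  | [] => 1
  | c :: rest => σ1 ^ (-c) * Sq * prodCS rest

/-- The product σ_{1,q}^{-a_1}·σ_{2,q}^{a_2}⋯σ_{1,q}^{-a_{2m-1}}·σ_{2,q}^{a_{2m}}. -/
def prodReg : List ℤ → (Matrix (Fin 2) (Fin 2) K)ˣ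
  | [] => 1
  | [a] => σ1 ^ (-a)
  | a :: b :: rest => σ1 ^ (-a) * σ2 ^ b * prodReg rest

/-- The sum a_2 + a_4 + ⋯ of the even-indexed entries. -/
def evenSum : List ℤ → ℤ
  | [] => 0
  | [_] => 0
  | _ :: b :: rest => b + evenSum rest

/-- Möbius action of a 2×2 matrix on ℚ(q). -/
def mobius (A : Matrix (Fin 2) (Fin 2) K) (x : K) : K :=
  (A 0 0 * x + A 0 1) / (A 1 0 * x + A 1 1)

lemma q_ne_one : (1 : K) - q ≠ 0 := by
  intro h
  have hq : q = 1 := by linear_combination -h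
  have : (RatFunc.X : RatFunc ℚ) ≠ 1 := by
    intro hx
    have := congrArg (RatFunc.eval (RingHom.id ℚ) 0) hx
    simp at this
  exact this (by simpa [q] using hq)

lemma qf_eq (cl : ℤ) : qf (cl - 1) = qs cl - q ^ (cl - 2) := by
  have hq : (q : K) ≠ 0 := RatFunc.X_ne_zero
  have h1 : (1 : K) - q ≠ 0 := q_ne_one
  unfold qf qfX qs qsX
  rw [div_sub' h1]
  congr 1
  have e1 : cl - 1 - 1 = cl - 2 := by ring
  have e2 : cl - 1 + 1 = cl := by ring
  rw [e1, e2]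
  have e3 : q ^ (cl - 1) = q ^ (cl - 2) * q := by
    rw [show cl - 1 = cl - 2 + 1 by ring, zpow_add_one₀ hq]
  rw [e3]; ring

lemma Eflat_aux : ∀ (cs : List ℤ) (cl : ℤ),
    Eflat (cs ++ [cl - 1]) = Esharp (cs ++ [cl]) - q ^ (cl - 2) * Esharp cs
  | [], cl => by
    simp only [List.nil_append, Eflat, EflatX, Esharp, EsharpX]
    rw [show qfX q (cl - 1) = qf (cl - 1) from rfl, qf_eq]
    simp [qs]
  | [c], cl => by
    simp only [List.cons_append, List.nil_append, Eflat, EflatX, Esharp, EsharpX]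
    rw [show qfX q (cl - 1) = qf (cl - 1) from rfl, qf_eq]
    simp only [qs]
    ring
  | c :: d :: rest, cl => by
    have h1 := Eflat_aux (d :: rest) cl
    have h2 := Eflat_aux rest cl
    simp only [List.cons_append] at h1 h2 ⊢
    rw [show Eflat (c :: d :: (rest ++ [cl - 1])) =
        qsX q c * EflatX q (d :: (rest ++ [cl - 1])) - q ^ (c - 1) * EflatX q (rest ++ [cl - 1])
        from rfl,
      show Esharp (c :: d :: (rest ++ [cl])) =
        qsX q c * EsharpX q (d :: (rest ++ [cl])) - q ^ (c - 1) * EsharpX q (rest ++ [cl])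
        from rfl,
      show Esharp (c :: d :: rest) =
        qsX q c * EsharpX q (d :: rest) - q ^ (c - 1) * EsharpX q rest from rfl]
    have h1' : EflatX q (d :: (rest ++ [cl - 1])) =
        EsharpX q (d :: (rest ++ [cl])) - q ^ (cl - 2) * EsharpX q (d :: rest) := by
      simpa [Eflat, Esharp, List.cons_append] using h1
    have h2' : EflatX q (rest ++ [cl - 1]) =
        EsharpX q (rest ++ [cl]) - q ^ (cl - 2) * EsharpX q rest := by
      simpa [Eflat, Esharp] using h2
    rw [h1', h2']
    ring

/-- E^♭_l(c_1,…,c_{l−1},c_l−1) = E^♯_l(c_1,…,c_l) − q^{c_l−2}·E^♯_{l−1}(c_1,…,c_{l−1}). -/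
theorem Eflat_last_minus_one (cs : List ℤ) (cl : ℤ) :
    Eflat (cs ++ [cl - 1]) = Esharp (cs ++ [cl]) - q ^ (cl - 2) * Esharp cs := by
  exact Eflat_aux cs cl
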